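/- Fix partitions-with-colors ρ, σ ∈ 𝕐([T]) (types with no trivially colored 1-cycles) and r ∈ {0,1,…,min(|ρ|,|σ|)}. Let S^{(n)}_{ρ,σ}(r) be the set of pairs (g,h) with g in the conjugacy class of S_n(T) of type ι_{n,|ρ|}ρ, h in the class of type ι_{n,|σ|}σ, and |supp g ∩ supp h| = r. Then there is a constant C (independent of n) with |S^{(n)}_{ρ,σ}(r)| ≤ C·n^{|ρ|+|σ|−r} for all n. -/

import Mathlib

/-- The action of `S_n` on `T^n` by permuting coordinates. -/
def permAct (T : Type*) [Group T] (n : ℕ) : Equiv.Perm (Fin n) →* MulAut (Fin n → T) where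
  toFun σ :=
    { toFun := fun f => f ∘ σ.symm
      invFun := fun f => f ∘ σ
      left_inv := fun f => by ext i; simp
      right_inv := fun f => by ext i; simp
      map_mul' := fun f g => rfl }
  map_one' := rfl
  map_mul' := fun σ τ => rfl

/-- The wreath product `S_n(T) = T^n ⋊ S_n`. -/
abbrev Wreath (T : Type*) [Group T] (n : ℕ) :=
  SemidirectProduct (Fin n → T) (Equiv.Perm (Fin n)) (permAct T n)

open Classical in
/-- The support of `g = (x_1,…,x_n)τ ∈ S_n(T)`. -/
noncomputable def wSupp {T : Type*} [Group T] {n : ℕ} (g : Wreath T n) : Finset (Fin n) :=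
  g.right.support ∪ Finset.univ.filter (fun j => g.left j ≠ 1)

/-- The natural embedding `S_k(T) ⊆ S_n(T)` (`k ≤ n`), padding with identities;
the conjugacy class in `S_n(T)` of the image of an element of type `ρ` is the class of
type `ι_{n,k} ρ`. -/
noncomputable def embW {T : Type*} [Group T] {k n : ℕ} (h : k ≤ n) (g : Wreath T k) :
    Wreath T n :=
  ⟨fun j => if hj : (j : ℕ) < k then g.left ⟨j, hj⟩ else 1,
   g.right.viaEmbedding (Fin.castLEEmb h)⟩

section Aux

variable {T : Type*} [Group T] {n : ℕ}

lemma permAct_apply (σ : Equiv.Perm (Fin n)) (f : Fin n → T) (j : Fin n) :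
    permAct T n σ f j = f (σ⁻¹ j) := rfl

lemma conj_left (c g : Wreath T n) (j : Fin n) :
    (c * g * c⁻¹).left j
      = c.left j * g.left (c.right⁻¹ j) * (c.left (c.right (g.right⁻¹ (c.right⁻¹ j))))⁻¹ := by
  simp only [SemidirectProduct.mul_left, SemidirectProduct.mul_right,
    SemidirectProduct.inv_left, SemidirectProduct.inv_right,
    ← map_inv, ← map_mul, permAct_apply, Pi.mul_apply, Pi.inv_apply, mul_inv_rev, inv_inv,
    Equiv.Perm.coe_mul, Function.comp_apply]

lemma conj_right (c g : Wreath T n) (j : Fin n) :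
    (c * g * c⁻¹).right j = c.right (g.right (c.right⁻¹ j)) := by
  simp [SemidirectProduct.mul_right, SemidirectProduct.inv_right]

lemma mem_wSupp_iff {g : Wreath T n} {j : Fin n} :
    j ∈ wSupp g ↔ g.right j ≠ j ∨ g.left j ≠ 1 := by
  classical
  simp [wSupp, Equiv.Perm.mem_support]

lemma not_mem_wSupp {g : Wreath T n} {j : Fin n} :
    j ∉ wSupp g ↔ g.left j = 1 ∧ g.right j = j := by
  rw [mem_wSupp_iff]
  push_neg
  tauto

lemma right_mem_wSupp {g : Wreath T n} {j : Fin n} (h : j ∈ wSupp g) :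
    g.right j ∈ wSupp g := by
  classical
  by_cases hj : j ∈ g.right.support
  · exact Finset.mem_union_left _ (Equiv.Perm.apply_mem_support.mpr hj)
  · rwa [Equiv.Perm.notMem_support.mp hj]

lemma conj_not_mem_wSupp {c g : Wreath T n} {j : Fin n}
    (h : c.right⁻¹ j ∉ wSupp g) : j ∉ wSupp (c * g * c⁻¹) := by
  obtain ⟨h1, h2⟩ := not_mem_wSupp.mp h
  have h2' : g.right⁻¹ (c.right⁻¹ j) = c.right⁻¹ j := by
    conv_lhs => rw [← h2]
    simp
  rw [not_mem_wSupp, conj_left, conj_right, h1, h2', h2]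
  simp

lemma card_wSupp_le_of_isConj {k : ℕ} (hkn : k ≤ n) (g₀ : Wreath T k)
    {x : Wreath T n} (hx : IsConj (embW hkn g₀) x) : (wSupp x).card ≤ k := by
  classical
  obtain ⟨c, hc⟩ := isConj_iff.mp hx
  subst hc
  have h1 : wSupp (c * embW hkn g₀ * c⁻¹) ⊆ (wSupp (embW hkn g₀)).image c.right := by
    intro j hj
    by_contra hj'
    refine absurd hj (conj_not_mem_wSupp fun hmem => hj' ?_)
    exact Finset.mem_image.mpr ⟨_, hmem, by simp⟩
  have h2 : wSupp (embW hkn g₀) ⊆ (Finset.univ : Finset (Fin k)).map (Fin.castLEEmb hkn) := by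
    intro j hj
    by_cases hjk : (j : ℕ) < k
    · exact Finset.mem_map.mpr ⟨⟨j, hjk⟩, Finset.mem_univ _, rfl⟩
    · exfalso
      refine absurd hj (not_mem_wSupp.mpr ⟨?_, ?_⟩)
      · show (if hj : (j : ℕ) < k then g₀.left ⟨j, hj⟩ else 1) = 1
        rw [dif_neg hjk]
      · show g₀.right.viaEmbedding (Fin.castLEEmb hkn) j = j
        refine Equiv.Perm.viaEmbedding_apply_of_notMem _ _ _ ?_
        rintro ⟨i, rfl⟩
        exact hjk i.2
  calc (wSupp (c * embW hkn g₀ * c⁻¹)).card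
      ≤ ((wSupp (embW hkn g₀)).image c.right).card := Finset.card_le_card h1
    _ ≤ (wSupp (embW hkn g₀)).card := Finset.card_image_le
    _ ≤ ((Finset.univ : Finset (Fin k)).map (Fin.castLEEmb hkn)).card := Finset.card_le_card h2
    _ = k := by simp

end Aux

/-- Fix types `ρ, σ` (with no trivially colored `1`-cycles), represented by elements
`g₀ ∈ S_{k₁}(T)`, `h₀ ∈ S_{k₂}(T)` of full support (so `|ρ| = k₁`, `|σ| = k₂`), and
`r ≤ min(k₁,k₂)`.  Then the set `S^{(n)}_{ρ,σ}(r)` of pairs `(g,h)` with `g` of type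
`ι_{n,k₁}ρ`, `h` of type `ι_{n,k₂}σ`, and `|supp g ∩ supp h| = r` satisfies
`|S^{(n)}_{ρ,σ}(r)| ≤ C·n^{k₁+k₂−r}` for a constant `C` independent of `n`. -/
theorem card_support_overlap_bound (T : Type*) [Group T] [Finite T]
    (k₁ k₂ : ℕ) (g₀ : Wreath T k₁) (h₀ : Wreath T k₂)
    (hg₀ : wSupp g₀ = Finset.univ) (hh₀ : wSupp h₀ = Finset.univ)
    (r : ℕ) (hr : r ≤ min k₁ k₂) :
    ∃ C : ℕ, ∀ n : ℕ, ∀ (hn₁ : k₁ ≤ n) (hn₂ : k₂ ≤ n),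
      Nat.card {p : Wreath T n × Wreath T n //
          IsConj (embW hn₁ g₀) p.1 ∧ IsConj (embW hn₂ h₀) p.2 ∧
          (wSupp p.1 ∩ wSupp p.2).card = r} ≤ C * n ^ (k₁ + k₂ - r) := by
  classical
  set m := k₁ + k₂ - r with hm
  set E := T × Option (Fin m) × T × Option (Fin m) with hE
  refine ⟨Nat.card E ^ m * 2 ^ m, fun n hn₁ hn₂ => ?_⟩
  set S := {p : Wreath T n × Wreath T n //
      IsConj (embW hn₁ g₀) p.1 ∧ IsConj (embW hn₂ h₀) p.2 ∧
      (wSupp p.1 ∩ wSupp p.2).card = r} with hS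
  -- the sorted list of the union of the supports
  set L : Wreath T n × Wreath T n → List (Fin n) :=
    fun p => (wSupp p.1 ∪ wSupp p.2).sort (· ≤ ·) with hL
  have hLto : ∀ p, (L p).toFinset = wSupp p.1 ∪ wSupp p.2 := fun p =>
    Finset.sort_toFinset _ _
  have hLlen : ∀ p : S, (L p.1).length ≤ m := by
    rintro ⟨p, hp1, hp2, hp3⟩
    have c1 : (wSupp p.1).card ≤ k₁ := card_wSupp_le_of_isConj hn₁ g₀ hp1
    have c2 : (wSupp p.2).card ≤ k₂ := card_wSupp_le_of_isConj hn₂ h₀ hp2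
    have hu := Finset.card_union_add_card_inter (wSupp p.1) (wSupp p.2)
    rw [hp3] at hu
    have : (wSupp p.1 ∪ wSupp p.2).card ≤ m := by omega
    simpa [L, Finset.length_sort] using this
  -- membership in the union is preserved by the permutation parts
  have hRmem1 : ∀ (p : Wreath T n × Wreath T n) (a : Fin n),
      a ∈ wSupp p.1 ∪ wSupp p.2 → p.1.right a ∈ wSupp p.1 ∪ wSupp p.2 := by
    intro p a ha
    by_cases h1 : a ∈ wSupp p.1
    · exact Finset.mem_union_left _ (right_mem_wSupp h1)
    · rw [(not_mem_wSupp.mp h1).2]; exact ha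
  have hRmem2 : ∀ (p : Wreath T n × Wreath T n) (a : Fin n),
      a ∈ wSupp p.1 ∪ wSupp p.2 → p.2.right a ∈ wSupp p.1 ∪ wSupp p.2 := by
    intro p a ha
    by_cases h1 : a ∈ wSupp p.2
    · exact Finset.mem_union_right _ (right_mem_wSupp h1)
    · rw [(not_mem_wSupp.mp h1).2]; exact ha
  -- index of an element in the list, as an `Option (Fin m)`
  set idx : List (Fin n) → Fin n → Option (Fin m) :=
    fun l b => if h : l.idxOf b < m then some ⟨_, h⟩ else none with hidx
  have idx_inj : ∀ (l : List (Fin n)), l.length ≤ m → ∀ (b₁ b₂ : Fin n), b₁ ∈ l → b₂ ∈ l →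
      idx l b₁ = idx l b₂ → b₁ = b₂ := by
    intro l hlen b₁ b₂ hb₁ hb₂ hi
    have h₁ : l.idxOf b₁ < m := lt_of_lt_of_le (List.idxOf_lt_length_iff.mpr hb₁) hlen
    have h₂ : l.idxOf b₂ < m := lt_of_lt_of_le (List.idxOf_lt_length_iff.mpr hb₂) hlen
    simp only [hidx, dif_pos h₁, dif_pos h₂, Option.some.injEq, Fin.mk.injEq] at hi
    exact (List.idxOf_inj hb₁).mp hi
  -- the encoding map
  set F : S → (Fin m → Option (Fin n)) × (Fin m → E) :=
    fun p => (fun i => (L p.1)[(i : ℕ)]?,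
      fun i => match (L p.1)[(i : ℕ)]? with
        | none => (1, none, 1, none)
        | some a => (p.1.1.left a, idx (L p.1) (p.1.1.right a),
                     p.1.2.left a, idx (L p.1) (p.1.2.right a))) with hF
  have hFinj : Function.Injective F := by
    rintro p q hpq
    have hpq1 := congrArg Prod.fst hpq
    have hpq2 := congrArg Prod.snd hpq
    simp only [hF] at hpq1 hpq2
    -- the lists agree
    have hlist : L p.1 = L q.1 := by
      refine List.ext_getElem? fun i => ?_
      by_cases hi : i < m
      · exact congrFun hpq1 ⟨i, hi⟩
      · rw [List.getElem?_eq_none (le_trans (hLlen p) (by omega)),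
            List.getElem?_eq_none (le_trans (hLlen q) (by omega))]
    have hU : wSupp p.1.1 ∪ wSupp p.1.2 = wSupp q.1.1 ∪ wSupp q.1.2 := by
      rw [← hLto p.1, ← hLto q.1, hlist]
    -- values agree on the union of the supports
    have hval : ∀ a ∈ wSupp p.1.1 ∪ wSupp p.1.2,
        p.1.1.left a = q.1.1.left a ∧ p.1.1.right a = q.1.1.right a ∧
        p.1.2.left a = q.1.2.left a ∧ p.1.2.right a = q.1.2.right a := by
      intro a ha
      have haL : a ∈ L p.1 := by rw [← List.mem_toFinset, hLto]; exact ha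
      obtain ⟨i, hilen, hia⟩ := List.mem_iff_getElem.mp haL
      have him : i < m := lt_of_lt_of_le hilen (hLlen p)
      have hsome : (L p.1)[(i : ℕ)]? = some a := by
        rw [List.getElem?_eq_getElem hilen, hia]
      have h2 := congrFun hpq2 ⟨i, him⟩
      rw [← hlist] at h2
      rw [hsome] at h2
      have e1 : p.1.1.left a = q.1.1.left a := congrArg (fun x => x.1) h2
      have e2 : idx (L p.1) (p.1.1.right a) = idx (L p.1) (q.1.1.right a) :=
        congrArg (fun x => x.2.1) h2
      have e3 : p.1.2.left a = q.1.2.left a := congrArg (fun x => x.2.2.1) h2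
      have e4 : idx (L p.1) (p.1.2.right a) = idx (L p.1) (q.1.2.right a) :=
        congrArg (fun x => x.2.2.2) h2
      have hmem1 : p.1.1.right a ∈ L p.1 := by
        rw [← List.mem_toFinset, hLto]; exact hRmem1 p.1 a ha
      have hmem1' : q.1.1.right a ∈ L p.1 := by
        rw [← List.mem_toFinset, hLto, hU]
        exact hRmem1 q.1 a (hU ▸ ha)
      have hmem2 : p.1.2.right a ∈ L p.1 := by
        rw [← List.mem_toFinset, hLto]; exact hRmem2 p.1 a ha
      have hmem2' : q.1.2.right a ∈ L p.1 := by
        rw [← List.mem_toFinset, hLto, hU]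
        exact hRmem2 q.1 a (hU ▸ ha)
      refine ⟨e1, idx_inj _ (hLlen p) _ _ hmem1 hmem1' (by rw [e2, hlist]),
              e3, idx_inj _ (hLlen p) _ _ hmem2 hmem2' (by rw [e4, hlist])⟩
    -- values agree outside the union
    have hout : ∀ a : Fin n, a ∉ wSupp p.1.1 ∪ wSupp p.1.2 →
        p.1.1.left a = q.1.1.left a ∧ p.1.1.right a = q.1.1.right a ∧
        p.1.2.left a = q.1.2.left a ∧ p.1.2.right a = q.1.2.right a := by
      intro a ha
      have ha' : a ∉ wSupp q.1.1 ∪ wSupp q.1.2 := hU ▸ ha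
      have n1 := not_mem_wSupp.mp (fun h => ha (Finset.mem_union_left _ h))
      have n2 := not_mem_wSupp.mp (fun h => ha (Finset.mem_union_right _ h))
      have n1' := not_mem_wSupp.mp (fun h => ha' (Finset.mem_union_left _ h))
      have n2' := not_mem_wSupp.mp (fun h => ha' (Finset.mem_union_right _ h))
      exact ⟨n1.1.trans n1'.1.symm, n1.2.trans n1'.2.symm,
             n2.1.trans n2'.1.symm, n2.2.trans n2'.2.symm⟩
    have hall : ∀ a : Fin n,
        p.1.1.left a = q.1.1.left a ∧ p.1.1.right a = q.1.1.right a ∧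
        p.1.2.left a = q.1.2.left a ∧ p.1.2.right a = q.1.2.right a := by
      intro a
      by_cases ha : a ∈ wSupp p.1.1 ∪ wSupp p.1.2
      · exact hval a ha
      · exact hout a ha
    refine Subtype.ext (Prod.ext ?_ ?_)
    · exact SemidirectProduct.ext (funext fun a => (hall a).1)
        (Equiv.ext fun a => (hall a).2.1)
    · exact SemidirectProduct.ext (funext fun a => (hall a).2.2.1)
        (Equiv.ext fun a => (hall a).2.2.2)
  -- counting
  have hcard : Nat.card S ≤ (n + 1) ^ m * Nat.card E ^ m := by
    have := Nat.card_le_card_of_injective F hFinj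
    rwa [Nat.card_prod, Nat.card_fun, Nat.card_fun, Finite.card_option,
      Nat.card_eq_fintype_card (α := Fin n), Nat.card_eq_fintype_card (α := Fin m),
      Fintype.card_fin, Fintype.card_fin] at this
  rcases Nat.eq_zero_or_pos n with hn0 | hn0
  · subst hn0
    have hk₁ : k₁ = 0 := Nat.le_zero.mp hn₁
    have hk₂ : k₂ = 0 := Nat.le_zero.mp hn₂
    have hr0 : r = 0 := by omega
    have hm0 : m = 0 := by omega
    calc Nat.card S ≤ (0 + 1) ^ m * Nat.card E ^ m := hcard
      _ = Nat.card E ^ m := by simp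
      _ ≤ Nat.card E ^ m * 2 ^ m * 0 ^ (k₁ + k₂ - r) := by
          rw [← hm, hm0]; simp
  · calc Nat.card S ≤ (n + 1) ^ m * Nat.card E ^ m := hcard
      _ ≤ (2 * n) ^ m * Nat.card E ^ m := by
          gcongr
          omega
      _ = Nat.card E ^ m * 2 ^ m * n ^ m := by ring
      _ = Nat.card E ^ m * 2 ^ m * n ^ (k₁ + k₂ - r) := by rw [← hm]
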